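/- A topological space X is extremally disconnected (i.e. the closure of every open subset of X is open) if and only if the map ∅ → X has the left lifting property with respect to the map q : F₄ → F₃, where F₄ is the four-point space {u, z', z, v} whose closed sets are generated by {z'} and {z} (so u specializes to z', v specializes to z, and u, v are open points), F₃ is the three-point space {u, w, v} whose only nontrivial closed set is {w} (u, v open points, w closed), and q sends u ↦ u, v ↦ v, z' ↦ w, z ↦ w. Equivalently: X is extremally disconnected iff every continuous map X → F₃ factors as a continuous map X → F₄ followed by q. -/

import Mathlib

/-- `f` has the left lifting property with respect to `g` in the category of
topological spaces. -/
def TopLift {A B X Y : Type*} [TopologicalSpace A] [TopologicalSpace B]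
    [TopologicalSpace X] [TopologicalSpace Y] (f : A → B) (g : X → Y) : Prop :=
  ∀ (u : A → X) (v : B → Y), Continuous u → Continuous v → g ∘ u = v ∘ f →
    ∃ w : B → X, Continuous w ∧ w ∘ f = u ∧ g ∘ w = v

/-- The four-point space `{u, z', z, v}`: a set is open iff it contains `u` whenever it
contains `z'`, and contains `v` whenever it contains `z`. -/
inductive F4 : Type
  | u | z' | z | v

instance : TopologicalSpace F4 where
  IsOpen S := (F4.z' ∈ S → F4.u ∈ S) ∧ (F4.z ∈ S → F4.v ∈ S)
  isOpen_univ := ⟨fun _ => trivial, fun _ => trivial⟩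
  isOpen_inter _ _ hs ht :=
    ⟨fun h => ⟨hs.1 h.1, ht.1 h.2⟩, fun h => ⟨hs.2 h.1, ht.2 h.2⟩⟩
  isOpen_sUnion _ hS :=
    ⟨fun ⟨t, ht, hz⟩ => ⟨t, ht, (hS t ht).1 hz⟩,
     fun ⟨t, ht, hz⟩ => ⟨t, ht, (hS t ht).2 hz⟩⟩

/-- The three-point space `{u, w, v}`: a set is open iff it contains `u` and `v`
whenever it contains `w` (so `w` is the unique closed point). -/
inductive F3 : Type
  | u | w | v

instance : TopologicalSpace F3 where
  IsOpen S := F3.w ∈ S → F3.u ∈ S ∧ F3.v ∈ S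
  isOpen_univ _ := ⟨trivial, trivial⟩
  isOpen_inter _ _ hs ht h :=
    ⟨⟨(hs h.1).1, (ht h.2).1⟩, ⟨(hs h.1).2, (ht h.2).2⟩⟩
  isOpen_sUnion _ hS := fun ⟨t, ht, hw⟩ =>
    ⟨⟨t, ht, (hS t ht hw).1⟩, ⟨t, ht, (hS t ht hw).2⟩⟩

/-- The map `q : F4 → F3` sending `u ↦ u`, `v ↦ v`, `z' ↦ w`, `z ↦ w`. -/
def q : F4 → F3
  | F4.u => F3.u
  | F4.v => F3.v
  | F4.z' => F3.w
  | F4.z => F3.w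

lemma isOpen_F3 (S : Set F3) (h : F3.w ∈ S → F3.u ∈ S ∧ F3.v ∈ S) : IsOpen S := h
lemma isOpen_F4 (S : Set F4) (h : (F4.z' ∈ S → F4.u ∈ S) ∧ (F4.z ∈ S → F4.v ∈ S)) :
    IsOpen S := h
lemma isOpen_F4_elim (S : Set F4) (h : IsOpen S) :
    (F4.z' ∈ S → F4.u ∈ S) ∧ (F4.z ∈ S → F4.v ∈ S) := h
lemma isOpen_F3_elim (S : Set F3) (h : IsOpen S) : F3.w ∈ S → F3.u ∈ S ∧ F3.v ∈ S := h

/-- A topological space `X` is extremally disconnected iff `∅ → X` has the left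
lifting property with respect to `q : F4 → F3`, i.e. every continuous map `X → F3`
factors continuously through `q`. -/
theorem stmt19 {X : Type*} [TopologicalSpace X] :
    ExtremallyDisconnected X ↔ TopLift (Empty.elim : Empty → X) q := by
  classical
  constructor
  · intro hX f v _ hv _
    set U : Set X := v ⁻¹' {F3.u} with hUdef
    set V : Set X := v ⁻¹' {F3.v} with hVdef
    have hUopen : IsOpen U := hv.isOpen_preimage _ (isOpen_F3 _ (fun h => by simp at h))
    have hVopen : IsOpen V := hv.isOpen_preimage _ (isOpen_F3 _ (fun h => by simp at h))
    set C : Set X := closure U with hCdef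
    have hCopen : IsOpen C := hX.open_closure U hUopen
    have hUC : U ⊆ C := subset_closure
    have hVC : ∀ x, x ∈ V → x ∉ C := by
      intro x hxV hxC
      have : C ⊆ Vᶜ := closure_minimal (fun y hy hy' => by
        have h1 : v y = F3.u := hy
        have h2 : v y = F3.v := hy'
        rw [h1] at h2; exact absurd h2 (by simp)) (isClosed_compl_iff.mpr hVopen)
      exact this hxC hxV
    set w : X → F4 := fun x =>
      if x ∈ U then F4.u else if x ∈ V then F4.v else if x ∈ C then F4.z' else F4.z
      with hwdef
    have hwU : ∀ x, x ∈ U → w x = F4.u := fun x hx => if_pos hx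
    have hwV : ∀ x, x ∈ V → w x = F4.v := by
      intro x hx
      have hxU : x ∉ U := fun h => hVC x hx (hUC h)
      simp only [hwdef, if_neg hxU, if_pos hx]
    have hwz' : ∀ x, x ∉ U → x ∉ V → x ∈ C → w x = F4.z' := by
      intro x h1 h2 h3; simp only [hwdef, if_neg h1, if_neg h2, if_pos h3]
    have hwz : ∀ x, x ∉ U → x ∉ V → x ∉ C → w x = F4.z := by
      intro x h1 h2 h3; simp only [hwdef, if_neg h1, if_neg h2, if_neg h3]
    refine ⟨w, ?_, funext fun e => e.elim, ?_⟩
    · rw [continuous_def]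
      intro S hS
      obtain ⟨h1, h2⟩ := isOpen_F4_elim S hS
      have key : w ⁻¹' S =
          (if F4.z' ∈ S then C else if F4.u ∈ S then U else (∅ : Set X)) ∪
          (if F4.z ∈ S then Cᶜ else if F4.v ∈ S then V else ∅) := by
        ext x
        by_cases hxU : x ∈ U
        · have hxC : x ∈ C := hUC hxU
          have hxV : x ∉ V := fun h => hVC x h hxC
          simp only [Set.mem_preimage, hwU x hxU, Set.mem_union]
          split_ifs with a b c d <;> simp_all <;> tauto
        · by_cases hxV : x ∈ V
          · have hxC : x ∉ C := hVC x hxV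
            simp only [Set.mem_preimage, hwV x hxV, Set.mem_union]
            split_ifs with a b c d <;> simp_all <;> tauto
          · by_cases hxC : x ∈ C
            · simp only [Set.mem_preimage, hwz' x hxU hxV hxC, Set.mem_union]
              split_ifs with a b c d <;> simp_all <;> tauto
            · simp only [Set.mem_preimage, hwz x hxU hxV hxC, Set.mem_union]
              split_ifs with a b c d <;> simp_all <;> tauto
      rw [key]
      apply IsOpen.union
      · split_ifs <;> simp [hCopen, hUopen]
      · split_ifs <;> simp [isClosed_closure.isOpen_compl, hVopen, hCdef, isClosed_closure]
    · funext x
      by_cases hxU : x ∈ U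
      · simp only [Function.comp_apply, hwU x hxU]
        exact (hxU : v x = F3.u).symm
      · by_cases hxV : x ∈ V
        · simp only [Function.comp_apply, hwV x hxV]
          exact (hxV : v x = F3.v).symm
        · have hvw : v x = F3.w := by
            cases h : v x
            · exact absurd h hxU
            · rfl
            · exact absurd h hxV
          by_cases hxC : x ∈ C
          · simp only [Function.comp_apply, hwz' x hxU hxV hxC, q, hvw]
          · simp only [Function.comp_apply, hwz x hxU hxV hxC, q, hvw]
  · intro hlift
    constructor
    intro U hUopen
    set V : Set X := (closure U)ᶜ with hVdef
    have hVopen : IsOpen V := isClosed_closure.isOpen_compl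
    set v : X → F3 := fun x => if x ∈ U then F3.u else if x ∈ V then F3.v else F3.w
      with hvdef
    have hvcont : Continuous v := by
      rw [continuous_def]
      intro S hS
      have hS' := isOpen_F3_elim S hS
      by_cases hw : F3.w ∈ S
      · have huS := (hS' hw).1
        have hvS := (hS' hw).2
        have : S = Set.univ := by
          ext y; cases y <;> simp [hw, huS, hvS]
        simp [this]
      · have key : v ⁻¹' S = (if F3.u ∈ S then U else ∅) ∪ (if F3.v ∈ S then V else ∅) := by
          ext x
          simp only [Set.mem_preimage, hvdef, Set.mem_union]
          by_cases hxU : x ∈ U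
          · have hxV : x ∉ V := fun h => h (subset_closure hxU)
            simp only [if_pos hxU]
            split_ifs with a b <;> simp_all <;> tauto
          · by_cases hxV : x ∈ V
            · simp only [if_neg hxU, if_pos hxV]
              have hxU' : ¬ x ∈ U := hxU
              split_ifs with a b <;> simp_all <;> tauto
            · simp only [if_neg hxU, if_neg hxV]
              split_ifs with a b <;> simp_all <;> tauto
        rw [key]
        apply IsOpen.union <;> split_ifs <;> simp [hUopen, hVopen]
    obtain ⟨w, hwcont, -, hqw⟩ := hlift Empty.elim v
      (continuous_of_discreteTopology) hvcont (funext fun e => e.elim)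
    set A : Set X := w ⁻¹' {F4.u, F4.z'} with hAdef
    have hAopen : IsOpen A := hwcont.isOpen_preimage _ (isOpen_F4 _
      ⟨fun _ => Or.inl rfl, fun h => by simp at h⟩)
    have hAclosed : IsClosed A := by
      rw [← isOpen_compl_iff]
      have : Aᶜ = w ⁻¹' {F4.v, F4.z} := by
        ext x
        simp only [hAdef, Set.mem_compl_iff, Set.mem_preimage]
        cases w x <;> simp
      rw [this]
      exact hwcont.isOpen_preimage _ (isOpen_F4 _
        ⟨fun h => by simp at h, fun _ => Or.inl rfl⟩)
    have hqwx : ∀ x, q (w x) = v x := fun x => congrFun hqw x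
    have hUA : U ⊆ A := by
      intro x hx
      have : v x = F3.u := by simp [hvdef, hx]
      have hq : q (w x) = F3.u := by rw [hqwx x, this]
      cases h : w x <;> rw [h] at hq <;> simp [q] at hq <;> simp [hAdef, h]
    have hAU : A ⊆ closure U := by
      intro x hx
      by_contra hxc
      have hxV : x ∈ V := hxc
      have hxU : x ∉ U := fun h => hxc (subset_closure h)
      have : v x = F3.v := by simp [hvdef, hxU, hxV]
      have hq : q (w x) = F3.v := by rw [hqwx x, this]
      rcases hx with h | h <;> rw [h] at hq <;> simp [q] at hq
    have : closure U = A := le_antisymm (closure_minimal hUA hAclosed) hAU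
    rw [this]
    exact hAopen
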